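/- Let (Ṽ_i)_{i≥1} = ((Ṽ_i^{(1)}, Ṽ_i^{(2)}))_{i≥1} be a second i.i.d. family of [0,∞)²-valued random vectors, also independent of (T_i)_{i≥1} and of (G_t)_{t≥0}, and assume that (V^{(1)}, V^{(2)}) is smaller than (Ṽ^{(1)}, Ṽ^{(2)}) in the lower orthant order, i.e. P(V^{(1)} ≤ x₁, V^{(2)} ≤ x₂) ≤ P(Ṽ^{(1)} ≤ x₁, Ṽ^{(2)} ≤ x₂) for all x₁, x₂ ∈ ℝ, and the equivalent survival form P(V^{(1)} > x₁, V^{(2)} > x₂) ≤ P(Ṽ^{(1)} > x₁, Ṽ^{(2)} > x₂) for all x₁, x₂ ∈ ℝ. Then, letting φ̃_t(L) be the functional built with (Ṽ_i)_{i≥1} in place of (V_i)_{i≥1}, one has φ_t(L) ≤ φ̃_t(L) for all t ≥ 0 and all L ≥ 0; consequently the corresponding system lifetimes satisfy τ ≤_st τ̃ (the reliabilities satisfy e^{−H(t)} φ_t(L) ≤ e^{−H(t)} φ̃_t(L) for all t). -/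

import Mathlib

open MeasureTheory ProbabilityTheory Filter

noncomputable section

/-- Number of points of the family `T` lying in `(-∞, t]`
(the counting process `N_t = Σ_{i≥1} 1_{T_i ≤ t}`). -/
def countPts {Ω : Type*} (T : ℕ → Ω → ℝ) (t : ℝ) (ω : Ω) : ℕ :=
  Set.ncard {i : ℕ | T i ω ≤ t}

/-- Cumulative distribution function of a random variable `X` under `P`. -/
def cdfRV {Ω : Type*} [MeasurableSpace Ω] (P : Measure Ω) (X : Ω → ℝ) (x : ℝ) : ℝ :=
  (P {ω | X ω ≤ x}).toReal

/-- `T` enumerates the points `0 < T 0 < T 1 < ⋯ → ∞` of a non-homogeneous Poisson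
process with cumulated intensity `Λ`: the counting process has independent increments,
with `N_t - N_s` Poisson distributed with mean `Λ t - Λ s` for `0 ≤ s ≤ t`. -/
structure IsPoissonProcess {Ω : Type*} [MeasurableSpace Ω] (P : Measure Ω)
    (T : ℕ → Ω → ℝ) (Λ : ℝ → ℝ) : Prop where
  meas : ∀ i, Measurable (T i)
  pos : ∀ᵐ ω ∂P, 0 < T 0 ω
  strictMono : ∀ᵐ ω ∂P, StrictMono fun i => T i ω
  tendsto_atTop : ∀ᵐ ω ∂P, Tendsto (fun i => T i ω) atTop atTop
  indepIncrements : ∀ (n : ℕ) (t : Fin (n + 1) → ℝ), Monotone t → (∀ i, 0 ≤ t i) →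
    iIndepFun
      (fun i : Fin n => fun ω => countPts T (t i.succ) ω - countPts T (t i.castSucc) ω) P
  poissonLaw : ∀ s t : ℝ, 0 ≤ s → s ≤ t → ∀ k : ℕ,
    P {ω | countPts T t ω - countPts T s ω = k}
      = ENNReal.ofReal (Real.exp (-(Λ t - Λ s)) * (Λ t - Λ s) ^ k / Nat.factorial k)

/-- The shock model: `lam` is a nonnegative, measurable, locally integrable intensity
with cumulated intensity `Λ t = ∫_0^t lam`, positive for `t > 0`; `T` is a Poisson process
with cumulated intensity `Λ`; `(V i) = ((V i).1, (V i).2)` is an i.i.d. family of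
`[0,∞)²`-valued shock increments with common law `μ`, independent of `T`;
`q : [0,∞) → [0,1]` is measurable; and for each `t ≥ 0`, `G t` is a nonnegative random
variable independent of `((T i), (V i))`. -/
structure ShockModel {Ω : Type*} [MeasurableSpace Ω] (P : Measure Ω)
    (lam Λ : ℝ → ℝ) (T : ℕ → Ω → ℝ) (V : ℕ → Ω → ℝ × ℝ)
    (μ : Measure (ℝ × ℝ)) (q : ℝ → ℝ) (G : ℝ → Ω → ℝ) : Prop where
  prob : IsProbabilityMeasure P
  lam_meas : Measurable lam
  lam_nonneg : ∀ x, 0 ≤ lam x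
  lam_locInt : ∀ t : ℝ, 0 ≤ t → IntervalIntegrable lam volume 0 t
  Lam_def : ∀ t : ℝ, Λ t = ∫ x in (0:ℝ)..t, lam x
  Lam_pos : ∀ t : ℝ, 0 < t → 0 < Λ t
  poisson : IsPoissonProcess P T Λ
  V_meas : ∀ i, Measurable (V i)
  V_nonneg : ∀ i, ∀ᵐ ω ∂P, 0 ≤ (V i ω).1 ∧ 0 ≤ (V i ω).2
  V_law : ∀ i, Measure.map (V i) P = μ
  V_iIndep : iIndepFun V P
  V_T_indep : IndepFun (fun ω i => V i ω) (fun ω i => T i ω) P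
  q_meas : Measurable q
  q_mem : ∀ x, q x ∈ Set.Icc (0 : ℝ) 1
  G_meas : ∀ t, Measurable (G t)
  G_nonneg : ∀ t : ℝ, 0 ≤ t → ∀ᵐ ω ∂P, 0 ≤ G t ω
  G_indep : ∀ t, IndepFun (G t) (fun ω i => (T i ω, V i ω)) P

/-- The functional
`φ_t(L) = E[ F_{G_t}(L − Σ_{i=1}^{N_t} V_i⁽²⁾) · exp(−Σ_{i=1}^{N_t} V_i⁽¹⁾ (t−T_i)) · Π_{i=1}^{N_t} q(T_i) ]`. -/
def phi {Ω : Type*} [MeasurableSpace Ω] (P : Measure Ω)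
    (T : ℕ → Ω → ℝ) (V : ℕ → Ω → ℝ × ℝ) (q : ℝ → ℝ) (G : ℝ → Ω → ℝ)
    (t L : ℝ) : ℝ :=
  ∫ ω, cdfRV P (G t) (L - ∑ i ∈ Finset.range (countPts T t ω), (V i ω).2)
      * Real.exp (- ∑ i ∈ Finset.range (countPts T t ω), (V i ω).1 * (t - T i ω))
      * ∏ i ∈ Finset.range (countPts T t ω), q (T i ω) ∂P

/-- The Laplace transform `μ̃₁(s) = E[exp(−s V⁽¹⁾)]` of the first marginal of the
shock increment distribution. -/
def laplace1 {Ω : Type*} [MeasurableSpace Ω] (P : Measure Ω)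
    (V : ℕ → Ω → ℝ × ℝ) (s : ℝ) : ℝ :=
  ∫ ω, Real.exp (-(s * (V 0 ω).1)) ∂P

/-- `a(t) = ∫_0^t μ̃₁(z) q(t−z) λ(t−z) dz`. -/
def aFun {Ω : Type*} [MeasurableSpace Ω] (P : Measure Ω)
    (lam q : ℝ → ℝ) (V : ℕ → Ω → ℝ × ℝ) (t : ℝ) : ℝ :=
  ∫ z in (0:ℝ)..t, laplace1 P V z * q (t - z) * lam (t - z)

/-- `P_n(t,L) = E[ F_{G_t}(L − Σ_{i=1}^n V_i⁽²⁾) · Π_{i=1}^n q(Z_i) e^{−(t−Z_i)V_i⁽¹⁾} ]`,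
where the `Z_i` are i.i.d. with density `x ↦ (λ(x)/Λ(t)) 1_{[0,t]}(x)`, independent of the
`V_i`; this joint expectation is written out as the corresponding iterated integral. -/
def Pn {Ω : Type*} [MeasurableSpace Ω] (P : Measure Ω)
    (lam q : ℝ → ℝ) (Λt : ℝ) (V : ℕ → Ω → ℝ × ℝ) (FG : ℝ → ℝ)
    (t L : ℝ) (n : ℕ) : ℝ :=
  ∫ z : Fin n → ℝ in Set.univ.pi fun _ => Set.Icc (0:ℝ) t,
    (∫ ω, FG (L - ∑ i : Fin n, (V i.val ω).2)
        * ∏ i : Fin n, (q (z i) * Real.exp (-((t - z i) * (V i.val ω).1))) ∂P)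
      * ∏ i : Fin n, (lam (z i) / Λt)

end


section Aux
open Set ENNReal


lemma exp_layer {s v : ℝ} (hs : 0 < s) :
    ∫⁻ u in Set.Ioi v, ENNReal.ofReal (s * Real.exp (-(s*u))) = ENNReal.ofReal (Real.exp (-(s*v))) := by
  have hint : IntegrableOn (fun u => s * Real.exp (-(s*u))) (Set.Ioi v) := by
    have := (exp_neg_integrableOn_Ioi v hs).const_mul s
    simp only [neg_mul] at this
    exact this
  have h1 : (∫ u in Set.Ioi v, s * Real.exp (-(s*u))) = Real.exp (-(s*v)) := by
    have h2 : (∫ u in Set.Ioi v, Real.exp (-(s*u))) = s⁻¹ * Real.exp (-(s*v)) := by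
      have := MeasureTheory.integral_comp_mul_left_Ioi (fun x => Real.exp (-x)) v hs
      simp only [smul_eq_mul] at this
      rw [this, integral_exp_neg_Ioi]
    rw [integral_const_mul, h2]
    field_simp
  rw [← h1, ← ofReal_integral_eq_lintegral_ofReal hint]
  filter_upwards with u
  positivity

lemma quadrant_mono {μ ν : Measure (ℝ × ℝ)}
    (hlo : ∀ x₁ x₂ : ℝ, μ {p | p.1 ≤ x₁ ∧ p.2 ≤ x₂} ≤ ν {p | p.1 ≤ x₁ ∧ p.2 ≤ x₂}) (b : ℝ) :
    μ {p | p.2 ≤ b} ≤ ν {p | p.2 ≤ b} := by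
  have hU : ∀ (ρ : Measure (ℝ × ℝ)), ρ {p | p.2 ≤ b} = ⨆ k : ℕ, ρ {p | p.1 ≤ k ∧ p.2 ≤ b} := by
    intro ρ
    have h : {p : ℝ × ℝ | p.2 ≤ b} = ⋃ k : ℕ, {p | p.1 ≤ (k:ℝ) ∧ p.2 ≤ b} := by
      ext p
      simp only [Set.mem_setOf_eq, Set.mem_iUnion]
      constructor
      · intro h
        obtain ⟨k, hk⟩ := exists_nat_ge p.1
        exact ⟨k, hk, h⟩
      · rintro ⟨k, _, h⟩; exact h
    rw [h, Directed.measure_iUnion]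
    intro i j
    refine ⟨max i j, fun p hp => ⟨hp.1.trans ?_, hp.2⟩, fun p hp => ⟨hp.1.trans ?_, hp.2⟩⟩
    · exact_mod_cast le_max_left i j
    · exact_mod_cast le_max_right i j
  rw [hU μ, hU ν]
  exact iSup_mono fun k => hlo k b

lemma lemA_key {ρ : Measure (ℝ × ℝ)} [IsProbabilityMeasure ρ]
    (hρ : ∀ᵐ p ∂ρ, 0 ≤ p.1) {s : ℝ} (b : ℝ) (hs : 0 < s) :
    ∫⁻ p, (if p.2 ≤ b then ENNReal.ofReal (Real.exp (-(s * p.1))) else 0) ∂ρ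
      = ∫⁻ u, ρ {p | p.1 ≤ u ∧ p.2 ≤ b} * ENNReal.ofReal (s * Real.exp (-(s*u))) := by
  set F : ℝ × ℝ → ℝ → ℝ≥0∞ := fun p u =>
    if p.1 ≤ u ∧ p.2 ≤ b then ENNReal.ofReal (s * Real.exp (-(s*u))) else 0 with hF
  have step1 : ∫⁻ p, (if p.2 ≤ b then ENNReal.ofReal (Real.exp (-(s * p.1))) else 0) ∂ρ
      = ∫⁻ p, (∫⁻ u, F p u) ∂ρ := by
    apply lintegral_congr_ae
    filter_upwards [hρ] with p hp
    by_cases h2 : p.2 ≤ b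
    · simp only [h2, if_true, hF, and_true]
      have he : ∀ u : ℝ, (if p.1 ≤ u then ENNReal.ofReal (s * Real.exp (-(s*u))) else 0)
          = (Set.Ici p.1).indicator (fun u => ENNReal.ofReal (s * Real.exp (-(s*u)))) u := by
        intro u; by_cases h : p.1 ≤ u <;> simp [h, Set.indicator, Set.mem_Ici]
      simp only [he]
      rw [lintegral_indicator measurableSet_Ici,
        Measure.restrict_congr_set (Filter.EventuallyEq.symm Ioi_ae_eq_Ici)]
      exact (exp_layer hs).symm
    · simp [h2, hF]
  have hFu : AEMeasurable (Function.uncurry F) (ρ.prod volume) := by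
    apply Measurable.aemeasurable
    have hset : MeasurableSet {z : (ℝ × ℝ) × ℝ | z.1.1 ≤ z.2 ∧ z.1.2 ≤ b} :=
      (measurableSet_le (measurable_fst.comp measurable_fst) measurable_snd).inter
        (measurableSet_le (measurable_snd.comp measurable_fst) measurable_const)
    have heq : Function.uncurry F = fun z : (ℝ × ℝ) × ℝ =>
        if z.1.1 ≤ z.2 ∧ z.1.2 ≤ b then ENNReal.ofReal (s * Real.exp (-(s*z.2))) else 0 := rfl
    rw [heq]
    exact Measurable.ite hset
      (((measurable_snd.const_mul s).neg.exp.const_mul s).ennreal_ofReal) measurable_const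
  rw [step1, lintegral_lintegral_swap hFu]
  congr 1
  ext u
  have he : ∀ p : ℝ × ℝ, F p u = ({p : ℝ × ℝ | p.1 ≤ u ∧ p.2 ≤ b}).indicator
      (fun _ => ENNReal.ofReal (s * Real.exp (-(s*u)))) p := by
    intro p; by_cases h : p.1 ≤ u ∧ p.2 ≤ b <;> simp [h, hF, Set.indicator]
  simp only [he]
  have hms : MeasurableSet {p : ℝ × ℝ | p.1 ≤ u ∧ p.2 ≤ b} :=
    (measurableSet_le measurable_fst measurable_const).inter
      (measurableSet_le measurable_snd measurable_const)
  rw [lintegral_indicator_const hms, mul_comm]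

lemma lemA {μ ν : Measure (ℝ × ℝ)} [IsProbabilityMeasure μ] [IsProbabilityMeasure ν]
    (hμ : ∀ᵐ p ∂μ, 0 ≤ p.1) (hν : ∀ᵐ p ∂ν, 0 ≤ p.1)
    (hlo : ∀ x₁ x₂ : ℝ, μ {p | p.1 ≤ x₁ ∧ p.2 ≤ x₂} ≤ ν {p | p.1 ≤ x₁ ∧ p.2 ≤ x₂})
    {s : ℝ} (b : ℝ) (hs : 0 ≤ s) :
    ∫⁻ p, (if p.2 ≤ b then ENNReal.ofReal (Real.exp (-(s * p.1))) else 0) ∂μ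
      ≤ ∫⁻ p, (if p.2 ≤ b then ENNReal.ofReal (Real.exp (-(s * p.1))) else 0) ∂ν := by
  have hsetb : MeasurableSet {p : ℝ × ℝ | p.2 ≤ b} :=
    measurableSet_le measurable_snd measurable_const
  rcases eq_or_lt_of_le hs with rfl | hs
  · simp only [zero_mul, neg_zero, Real.exp_zero, ENNReal.ofReal_one]
    have h1 : ∀ ρ : Measure (ℝ × ℝ),
        ∫⁻ p, (if p.2 ≤ b then (1:ℝ≥0∞) else 0) ∂ρ = ρ {p | p.2 ≤ b} := by
      intro ρ
      have he : ∀ p : ℝ × ℝ, (if p.2 ≤ b then (1:ℝ≥0∞) else 0)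
          = {p : ℝ × ℝ | p.2 ≤ b}.indicator (fun _ => (1:ℝ≥0∞)) p := by
        intro p; by_cases h : p.2 ≤ b <;> simp [h]
      simp only [he]
      rw [lintegral_indicator_const hsetb 1, one_mul]
    rw [h1, h1]
    exact quadrant_mono hlo b
  · rw [lemA_key hμ b hs, lemA_key hν b hs]
    exact lintegral_mono fun u => mul_le_mul_left (hlo u b) _

-- the building-block integrand
noncomputable def IB (μ : Measure (ℝ × ℝ)) (n : ℕ) (s : Fin n → ℝ) (a : ℝ) : ℝ≥0∞ :=
  ∫⁻ x : Fin n → ℝ × ℝ,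
    (if (∑ i, (x i).2) ≤ a then ∏ i, ENNReal.ofReal (Real.exp (-(s i * (x i).1))) else 0)
    ∂(Measure.pi fun _ => μ)

lemma mIB {n : ℕ} (s : Fin n → ℝ) (a : ℝ) :
    Measurable fun x : Fin n → ℝ × ℝ =>
      (if (∑ i, (x i).2) ≤ a then ∏ i, ENNReal.ofReal (Real.exp (-(s i * (x i).1))) else 0) := by
  have msum : Measurable fun x : Fin n → ℝ × ℝ => ∑ i, (x i).2 :=
    Finset.measurable_sum _ fun i _ => (measurable_pi_apply i).snd
  have mprod : Measurable fun x : Fin n → ℝ × ℝ =>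
      ∏ i, ENNReal.ofReal (Real.exp (-(s i * (x i).1))) :=
    Finset.measurable_prod _ fun i _ =>
      (((measurable_pi_apply i).fst.const_mul (s i)).neg.exp).ennreal_ofReal
  exact Measurable.ite (measurableSet_le msum measurable_const) mprod measurable_const

lemma IB_succ (μ : Measure (ℝ × ℝ)) [IsProbabilityMeasure μ] {n : ℕ}
    (s : Fin (n+1) → ℝ) (a : ℝ) :
    IB μ (n+1) s a = ∫⁻ p, ENNReal.ofReal (Real.exp (-(s 0 * p.1)))
        * IB μ n (fun j => s j.succ) (a - p.2) ∂μ := by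
  classical
  have hmp := measurePreserving_piFinSuccAbove (fun _ : Fin (n+1) => μ) 0
  set e := MeasurableEquiv.piFinSuccAbove (fun _ : Fin (n+1) => ℝ × ℝ) 0 with he
  have hmap : Measure.map e (Measure.pi fun _ : Fin (n+1) => μ)
      = μ.prod (Measure.pi fun _ : Fin n => μ) := hmp.map_eq
  set g : (Fin (n+1) → ℝ × ℝ) → ℝ≥0∞ := fun x =>
    (if (∑ i, (x i).2) ≤ a then ∏ i, ENNReal.ofReal (Real.exp (-(s i * (x i).1))) else 0) with hg
  have hgm : Measurable g := mIB s a
  have h1 : IB (μ) (n+1) s a = ∫⁻ z, g (e.symm z) ∂(μ.prod (Measure.pi fun _ : Fin n => μ)) := by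
    rw [IB, hmp.lintegral_map_equiv (fun z => g (e.symm z))]
    congr 1
    ext x
    rw [MeasurableEquiv.symm_apply_apply]
  rw [h1, lintegral_prod (fun z => g (e.symm z)) ((hgm.comp e.symm.measurable).aemeasurable)]
  congr 1
  ext p
  have hz : ∀ y : Fin n → ℝ × ℝ, g (e.symm (p, y)) =
      ENNReal.ofReal (Real.exp (-(s 0 * p.1)))
        * (if (∑ j, (y j).2) ≤ a - p.2
            then ∏ j, ENNReal.ofReal (Real.exp (-(s j.succ * (y j).1))) else 0) := by
    intro y
    have h0 : (e.symm (p, y)) 0 = p := by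
      simp [he, MeasurableEquiv.piFinSuccAbove]
    have hsucc : ∀ j : Fin n, (e.symm (p, y)) j.succ = y j := by
      intro j
      have : (e.symm (p, y)) (Fin.succAbove 0 j) = y j := by
        simp [he, MeasurableEquiv.piFinSuccAbove]
      simpa [Fin.succAbove_zero] using this
    rw [hg]
    simp only
    rw [Fin.sum_univ_succAbove (fun i => ((e.symm (p, y)) i).2) 0,
      Fin.prod_univ_succAbove (fun i => ENNReal.ofReal
        (Real.exp (-(s i * ((e.symm (p, y)) i).1)))) 0]
    simp only [Fin.succAbove_zero, h0, hsucc]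
    have hiff : p.2 + ∑ j, (y j).2 ≤ a ↔ (∑ j, (y j).2) ≤ a - p.2 := by
      constructor <;> intro h <;> linarith
    by_cases h : (∑ j, (y j).2) ≤ a - p.2
    · rw [if_pos (hiff.mpr h), if_pos h]
    · rw [if_neg (fun hh => h (hiff.mp hh)), if_neg h, mul_zero]
  simp only [hz]
  rw [lintegral_const_mul _ (mIB (fun j : Fin n => s j.succ) (a - p.2))]
  rfl

lemma lemC {μ ν : Measure (ℝ × ℝ)} [IsProbabilityMeasure μ] [IsProbabilityMeasure ν]
    (hμ : ∀ᵐ p ∂μ, 0 ≤ p.1) (hν : ∀ᵐ p ∂ν, 0 ≤ p.1)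
    (hlo : ∀ x₁ x₂ : ℝ, μ {p | p.1 ≤ x₁ ∧ p.2 ≤ x₂} ≤ ν {p | p.1 ≤ x₁ ∧ p.2 ≤ x₂})
    {n : ℕ} (s' : Fin n → ℝ) {s0 : ℝ} (hs0 : 0 ≤ s0) (a : ℝ) :
    ∫⁻ p, ENNReal.ofReal (Real.exp (-(s0 * p.1))) * IB ν n s' (a - p.2) ∂μ
      ≤ ∫⁻ p, ENNReal.ofReal (Real.exp (-(s0 * p.1))) * IB ν n s' (a - p.2) ∂ν := by
  classical
  set Φ : (ℝ × ℝ) → (Fin n → ℝ × ℝ) → ℝ≥0∞ := fun p y =>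
    (∏ j, ENNReal.ofReal (Real.exp (-(s' j * (y j).1))))
      * (if p.2 ≤ a - ∑ j, (y j).2 then ENNReal.ofReal (Real.exp (-(s0 * p.1))) else 0) with hΦ
  have hΦm : Measurable (Function.uncurry Φ) := by
    have h1 : Measurable fun z : (ℝ × ℝ) × (Fin n → ℝ × ℝ) =>
        ∏ j, ENNReal.ofReal (Real.exp (-(s' j * (z.2 j).1))) :=
      Finset.measurable_prod _ fun j _ =>
        ((((measurable_pi_apply j).comp measurable_snd).fst.const_mul (s' j)).neg.exp).ennreal_ofReal
    have hset : MeasurableSet {z : (ℝ × ℝ) × (Fin n → ℝ × ℝ) | z.1.2 ≤ a - ∑ j, (z.2 j).2} := by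
      apply measurableSet_le measurable_fst.snd
      exact (Finset.measurable_sum _ fun j _ =>
        ((measurable_pi_apply j).comp measurable_snd).snd).const_sub a
    exact h1.mul (Measurable.ite hset
      ((measurable_fst.fst.const_mul s0).neg.exp.ennreal_ofReal) measurable_const)
  have claim : ∀ ρ : Measure (ℝ × ℝ), ∀ p : ℝ × ℝ,
      ENNReal.ofReal (Real.exp (-(s0 * p.1))) * IB ν n s' (a - p.2)
        = ∫⁻ y, Φ p y ∂(Measure.pi fun _ : Fin n => ν) := by
    intro ρ p
    rw [IB, ← lintegral_const_mul _ (mIB s' (a - p.2))]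
    apply lintegral_congr
    intro y
    by_cases h : (∑ j, (y j).2) ≤ a - p.2
    · have h' : p.2 ≤ a - ∑ j, (y j).2 := by linarith
      rw [hΦ]; simp only [if_pos h, if_pos h']
      ring
    · have h' : ¬ (p.2 ≤ a - ∑ j, (y j).2) := by intro hh; apply h; linarith
      rw [hΦ]; simp only [if_neg h, if_neg h', mul_zero]
  have swap : ∀ ρ : Measure (ℝ × ℝ), IsProbabilityMeasure ρ →
      ∫⁻ p, ENNReal.ofReal (Real.exp (-(s0 * p.1))) * IB ν n s' (a - p.2) ∂ρ
        = ∫⁻ y, ∫⁻ p, Φ p y ∂ρ ∂(Measure.pi fun _ : Fin n => ν) := by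
    intro ρ hρ
    haveI := hρ
    simp only [claim ρ]
    exact lintegral_lintegral_swap hΦm.aemeasurable
  rw [swap μ inferInstance, swap ν inferInstance]
  apply lintegral_mono
  intro y
  rw [hΦ]
  simp only
  rw [lintegral_const_mul _ (by
      exact Measurable.ite (measurableSet_le measurable_snd measurable_const)
        ((measurable_fst.const_mul s0).neg.exp.ennreal_ofReal) measurable_const),
    lintegral_const_mul _ (by
      exact Measurable.ite (measurableSet_le measurable_snd measurable_const)
        ((measurable_fst.const_mul s0).neg.exp.ennreal_ofReal) measurable_const)]
  exact mul_le_mul_right (lemA hμ hν hlo (a - ∑ j, (y j).2) hs0) _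

lemma lemB {μ ν : Measure (ℝ × ℝ)} [IsProbabilityMeasure μ] [IsProbabilityMeasure ν]
    (hμ : ∀ᵐ p ∂μ, 0 ≤ p.1) (hν : ∀ᵐ p ∂ν, 0 ≤ p.1)
    (hlo : ∀ x₁ x₂ : ℝ, μ {p | p.1 ≤ x₁ ∧ p.2 ≤ x₂} ≤ ν {p | p.1 ≤ x₁ ∧ p.2 ≤ x₂}) :
    ∀ (n : ℕ) (s : Fin n → ℝ), (∀ i, 0 ≤ s i) → ∀ a : ℝ, IB μ n s a ≤ IB ν n s a := by
  intro n
  induction n with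
  | zero =>
      intro s hs a
      rw [IB, IB]
      simp [lintegral_const]
  | succ n ih =>
      intro s hs a
      rw [IB_succ μ s a, IB_succ ν s a]
      calc ∫⁻ p, ENNReal.ofReal (Real.exp (-(s 0 * p.1)))
              * IB μ n (fun j => s j.succ) (a - p.2) ∂μ
          ≤ ∫⁻ p, ENNReal.ofReal (Real.exp (-(s 0 * p.1)))
              * IB ν n (fun j => s j.succ) (a - p.2) ∂μ := by
            exact lintegral_mono fun p =>
              mul_le_mul_right (ih (fun j => s j.succ) (fun j => hs j.succ) (a - p.2)) _
        _ ≤ ∫⁻ p, ENNReal.ofReal (Real.exp (-(s 0 * p.1)))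
              * IB ν n (fun j => s j.succ) (a - p.2) ∂ν :=
            lemC hμ hν hlo (fun j => s j.succ) (hs 0) a

lemma lemMain {μ ν : Measure (ℝ × ℝ)} [IsProbabilityMeasure μ] [IsProbabilityMeasure ν]
    (hμ : ∀ᵐ p ∂μ, 0 ≤ p.1) (hν : ∀ᵐ p ∂ν, 0 ≤ p.1)
    (hlo : ∀ x₁ x₂ : ℝ, μ {p | p.1 ≤ x₁ ∧ p.2 ≤ x₂} ≤ ν {p | p.1 ≤ x₁ ∧ p.2 ≤ x₂})
    {Ω' : Type*} [MeasurableSpace Ω'] (P' : Measure Ω') [IsProbabilityMeasure P']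
    {X : Ω' → ℝ} (hX : Measurable X) (n : ℕ) (s : Fin n → ℝ) (hs : ∀ i, 0 ≤ s i) (L : ℝ) :
    ∫⁻ x : Fin n → ℝ × ℝ, (P' {ω' | X ω' ≤ L - ∑ i, (x i).2})
        * ∏ i, ENNReal.ofReal (Real.exp (-(s i * (x i).1))) ∂(Measure.pi fun _ => μ)
      ≤ ∫⁻ x : Fin n → ℝ × ℝ, (P' {ω' | X ω' ≤ L - ∑ i, (x i).2})
        * ∏ i, ENNReal.ofReal (Real.exp (-(s i * (x i).1))) ∂(Measure.pi fun _ => ν) := by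
  classical
  set Φ : (Fin n → ℝ × ℝ) → Ω' → ℝ≥0∞ := fun x ω' =>
    (if (∑ i, (x i).2) ≤ L - X ω'
      then ∏ i, ENNReal.ofReal (Real.exp (-(s i * (x i).1))) else 0) with hΦ
  have hΦm : Measurable (Function.uncurry Φ) := by
    have hset : MeasurableSet {z : (Fin n → ℝ × ℝ) × Ω' | (∑ i, (z.1 i).2) ≤ L - X z.2} := by
      apply measurableSet_le
      · exact Finset.measurable_sum _ fun i _ =>
          ((measurable_pi_apply i).comp measurable_fst).snd
      · exact (hX.comp measurable_snd).const_sub L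
    exact Measurable.ite hset
      (Finset.measurable_prod _ fun i _ =>
        ((((measurable_pi_apply i).comp measurable_fst).fst.const_mul (s i)).neg.exp).ennreal_ofReal)
      measurable_const
  have hrepr : ∀ ρ : Measure (ℝ × ℝ), IsProbabilityMeasure ρ →
      (∫⁻ x : Fin n → ℝ × ℝ, (P' {ω' | X ω' ≤ L - ∑ i, (x i).2})
        * ∏ i, ENNReal.ofReal (Real.exp (-(s i * (x i).1))) ∂(Measure.pi fun _ => ρ))
      = ∫⁻ ω', IB ρ n s (L - X ω') ∂P' := by
    intro ρ hρ
    haveI := hρ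
    have h1 : ∀ x : Fin n → ℝ × ℝ,
        (P' {ω' | X ω' ≤ L - ∑ i, (x i).2})
          * ∏ i, ENNReal.ofReal (Real.exp (-(s i * (x i).1)))
        = ∫⁻ ω', Φ x ω' ∂P' := by
      intro x
      have h2 : P' {ω' | X ω' ≤ L - ∑ i, (x i).2}
          = ∫⁻ ω', (if X ω' ≤ L - ∑ i, (x i).2 then (1:ℝ≥0∞) else 0) ∂P' := by
        have h3 := lintegral_indicator_const (μ := P')
          (measurableSet_le hX measurable_const :
            MeasurableSet {ω' | X ω' ≤ L - ∑ i, (x i).2}) (1:ℝ≥0∞)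
        rw [one_mul] at h3
        rw [← h3]
        apply lintegral_congr; intro ω'
        by_cases h : X ω' ≤ L - ∑ i, (x i).2 <;> simp [h]
      rw [h2, ← lintegral_mul_const _ (Measurable.ite
        (measurableSet_le hX measurable_const) measurable_const measurable_const)]
      apply lintegral_congr; intro ω'
      have hiff : X ω' ≤ L - ∑ i, (x i).2 ↔ (∑ i, (x i).2) ≤ L - X ω' := by
        constructor <;> intro h <;> linarith
      by_cases h : X ω' ≤ L - ∑ i, (x i).2
      · rw [hΦ]; simp only [if_pos h, if_pos (hiff.mp h), one_mul]
      · rw [hΦ]; simp only [if_neg h, if_neg (fun hh => h (hiff.mpr hh)), zero_mul]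
    simp only [h1]
    rw [lintegral_lintegral_swap hΦm.aemeasurable]
    rfl
  rw [hrepr μ inferInstance, hrepr ν inferInstance]
  exact lintegral_mono fun ω' => lemB hμ hν hlo n s hs (L - X ω')


noncomputable def mT (t : ℝ) (τ : ℕ → ℝ) : ℕ := sInf {n | t < τ n}

lemma mT_eq_iff {t : ℝ} {τ : ℕ → ℝ} {n : ℕ} :
    mT t τ = n ↔ (t < τ n ∧ ∀ m < n, ¬ t < τ m) ∨ (n = 0 ∧ ∀ m, ¬ t < τ m) := by
  constructor
  · intro h
    by_cases hne : {n | t < τ n}.Nonempty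
    · left
      constructor
      · have h2 := Nat.sInf_mem hne
        rw [mT] at h
        exact h ▸ h2
      · intro m hm
        rw [← h] at hm
        exact Nat.notMem_of_lt_sInf hm
    · right
      have hS : {n | t < τ n} = ∅ := Set.not_nonempty_iff_eq_empty.mp hne
      rw [mT, hS, Nat.sInf_empty] at h
      refine ⟨h.symm, fun m hm => hne ⟨m, hm⟩⟩
  · rintro (⟨h1, h2⟩ | ⟨rfl, h⟩)
    · refine le_antisymm (Nat.sInf_le h1) ?_
      by_contra hlt
      push_neg at hlt
      have hmem : mT t τ ∈ {k | t < τ k} := Nat.sInf_mem ⟨n, h1⟩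
      exact h2 _ hlt hmem
    · rw [mT, show {n | t < τ n} = (∅ : Set ℕ) from Set.eq_empty_iff_forall_notMem.mpr h,
        Nat.sInf_empty]

lemma mT_meas (t : ℝ) : Measurable (mT t) := by
  apply measurable_to_countable'
  intro n
  have : mT t ⁻¹' {n} = ({τ : ℕ → ℝ | t < τ n} ∩ ⋂ m, ⋂ _ : m < n, {τ : ℕ → ℝ | ¬ t < τ m})
      ∪ (if n = 0 then ⋂ m, {τ : ℕ → ℝ | ¬ t < τ m} else ∅) := by
    ext τ
    simp only [Set.mem_preimage, Set.mem_singleton_iff, Set.mem_union, Set.mem_inter_iff,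
      Set.mem_iInter, Set.mem_setOf_eq, mT_eq_iff]
    constructor
    · rintro (⟨h1, h2⟩ | ⟨rfl, h⟩)
      · exact Or.inl ⟨h1, h2⟩
      · right
        simp only [if_pos rfl]
        exact Set.mem_iInter.mpr fun k => h k
    · rintro (⟨h1, h2⟩ | h)
      · exact Or.inl ⟨h1, h2⟩
      · by_cases hn : n = 0
        · rw [if_pos hn] at h
          simp only [Set.mem_iInter, Set.mem_setOf_eq] at h
          exact Or.inr ⟨hn, h⟩
        · rw [if_neg hn] at h
          exact absurd h (Set.notMem_empty τ)
  rw [this]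
  have hm : ∀ m : ℕ, MeasurableSet {τ : ℕ → ℝ | ¬ t < τ m} := by
    intro m
    have : {τ : ℕ → ℝ | ¬ t < τ m} = {τ : ℕ → ℝ | τ m ≤ t} := by ext τ; simp [not_lt]
    rw [this]
    exact measurableSet_le (measurable_pi_apply m) measurable_const
  apply MeasurableSet.union
  · exact (measurableSet_lt measurable_const (measurable_pi_apply n)).inter
      (MeasurableSet.iInter fun m => MeasurableSet.iInter fun _ => hm m)
  · by_cases hn : n = 0
    · rw [if_pos hn]; exact MeasurableSet.iInter hm
    · rw [if_neg hn]; exact MeasurableSet.empty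

lemma le_of_lt_mT {t : ℝ} {τ : ℕ → ℝ} {i : ℕ} (h : i < mT t τ) : τ i ≤ t :=
  not_lt.mp (Nat.notMem_of_lt_sInf h)

lemma ncard_eq_mT {t : ℝ} {τ : ℕ → ℝ} (hm : StrictMono τ) (ht : Tendsto τ atTop atTop) :
    Set.ncard {i | τ i ≤ t} = mT t τ := by
  obtain ⟨N, hN⟩ := (ht.eventually_ge_atTop (t+1)).exists
  have hne : {n | t < τ n}.Nonempty := ⟨N, by simp only [Set.mem_setOf_eq]; linarith⟩
  have hIio : {i | τ i ≤ t} = Set.Iio (mT t τ) := by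
    ext i
    simp only [Set.mem_setOf_eq, Set.mem_Iio]
    constructor
    · intro h
      by_contra hge
      push_neg at hge
      have : t < τ (mT t τ) := Nat.sInf_mem hne
      exact absurd h (not_le.mpr (lt_of_lt_of_le this (hm.monotone hge)))
    · exact fun h => le_of_lt_mT h
  rw [hIio, ← Finset.coe_range, Set.ncard_coe_finset, Finset.card_range]

lemma map_tuple_pi {Ω : Type*} [MeasurableSpace Ω] (P : Measure Ω) [IsProbabilityMeasure P]
    (V : ℕ → Ω → ℝ × ℝ) (hVm : ∀ i, Measurable (V i))
    (hInd : iIndepFun V P)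
    (μ : Measure (ℝ × ℝ)) [SigmaFinite μ] (hlaw : ∀ i, Measure.map (V i) P = μ) (n : ℕ) :
    Measure.map (fun ω => fun i : Fin n => V i.val ω) P = Measure.pi (fun _ => μ) := by
  symm
  apply Measure.pi_eq
  intro s hs
  classical
  have hmeas : Measurable (fun ω => fun i : Fin n => V i.val ω) :=
    measurable_pi_lambda _ fun i => hVm i.val
  rw [Measure.map_apply hmeas (MeasurableSet.univ_pi hs)]
  have hpre : (fun ω => fun i : Fin n => V i.val ω) ⁻¹' (Set.univ.pi s)
      = ⋂ j ∈ Finset.range n, V j ⁻¹' (fun k : ℕ =>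
          if hk : k < n then s ⟨k, hk⟩ else Set.univ) j := by
    ext ω
    simp only [Set.mem_preimage, Set.mem_pi, Set.mem_univ, forall_true_left, Set.mem_iInter,
      Finset.mem_range]
    constructor
    · intro h j hj
      simp only [dif_pos hj]
      exact h ⟨j, hj⟩
    · intro h i
      have := h i.val i.isLt
      simpa only [dif_pos i.isLt] using this
  rw [hpre, hInd.measure_inter_preimage_eq_mul (Finset.range n)
    (fun j hj => by
      by_cases hk : j < n
      · simpa only [dif_pos hk] using hs ⟨j, hk⟩
      · simp only [dif_neg hk]; exact MeasurableSet.univ)]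
  rw [← Fin.prod_univ_eq_prod_range]
  apply Finset.prod_congr rfl
  intro i _
  rw [dif_pos i.isLt, ← hlaw i.val, Measure.map_apply (hVm i.val) (hs i)]

noncomputable def TermF {Ω : Type*} [MeasurableSpace Ω] (P : Measure Ω) (X : Ω → ℝ)
    (q : ℝ → ℝ) (t L : ℝ) (μ : Measure (ℝ × ℝ)) (ρ : Measure (ℕ → ℝ)) (n : ℕ) : ℝ≥0∞ :=
  ∫⁻ τ : ℕ → ℝ,
    (if mT t τ = n then
      ENNReal.ofReal (∏ i : Fin n, q (τ i.val)) *
        ∫⁻ v : Fin n → ℝ × ℝ, (P {ω' | X ω' ≤ L - ∑ i, (v i).2})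
          * ∏ i, ENNReal.ofReal (Real.exp (-((t - τ i.val) * (v i).1)))
          ∂(Measure.pi fun _ => μ)
    else 0) ∂ρ

lemma TermF_mono {Ω : Type*} [MeasurableSpace Ω] (P : Measure Ω) [IsProbabilityMeasure P]
    {X : Ω → ℝ} (hX : Measurable X) (q : ℝ → ℝ) (t L : ℝ)
    {μ ν : Measure (ℝ × ℝ)} [IsProbabilityMeasure μ] [IsProbabilityMeasure ν]
    (hμ : ∀ᵐ p ∂μ, 0 ≤ p.1) (hν : ∀ᵐ p ∂ν, 0 ≤ p.1)
    (hlo : ∀ x₁ x₂ : ℝ, μ {p | p.1 ≤ x₁ ∧ p.2 ≤ x₂} ≤ ν {p | p.1 ≤ x₁ ∧ p.2 ≤ x₂})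
    (ρ : Measure (ℕ → ℝ)) (n : ℕ) :
    TermF P X q t L μ ρ n ≤ TermF P X q t L ν ρ n := by
  apply lintegral_mono
  intro τ
  by_cases h : mT t τ = n
  · simp only [if_pos h]
    refine mul_le_mul_right ?_ _
    refine lemMain hμ hν hlo P hX n (fun i => t - τ i.val) (fun i => ?_) L
    have hi : (i : ℕ) < mT t τ := by rw [h]; exact i.isLt
    exact sub_nonneg.mpr (le_of_lt_mT hi)
  · simp only [if_neg h, le_refl]

set_option maxHeartbeats 1000000 in
lemma phi_repr {Ω : Type*} [MeasurableSpace Ω] {P : Measure Ω} {lam Λ : ℝ → ℝ}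
    {T : ℕ → Ω → ℝ} {V : ℕ → Ω → ℝ × ℝ} {μ : Measure (ℝ × ℝ)} {q : ℝ → ℝ} {G : ℝ → Ω → ℝ}
    (hm : ShockModel P lam Λ T V μ q G) (t L : ℝ) :
    phi P T V q G t L
      = (∑' n, TermF P (G t) q t L μ (Measure.map (fun ω i => T i ω) P) n).toReal
    ∧ (∑' n, TermF P (G t) q t L μ (Measure.map (fun ω i => T i ω) P) n) ≤ 1 := by
  classical
  haveI := hm.prob
  haveI : IsProbabilityMeasure μ := by
    rw [← hm.V_law 0]; exact Measure.isProbabilityMeasure_map (hm.V_meas 0).aemeasurable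
  set Tseq : Ω → ℕ → ℝ := fun ω i => T i ω with hTseqdef
  have hTm : Measurable Tseq := measurable_pi_lambda _ hm.poisson.meas
  set M : Ω → ℕ := fun ω => mT t (Tseq ω) with hMdef
  have hMm : Measurable M := (mT_meas t).comp hTm
  have hcdfm : Measurable (cdfRV P (G t)) := by
    apply Monotone.measurable
    intro a b hab
    exact ENNReal.toReal_mono (measure_ne_top _ _)
      (measure_mono fun ω h => le_trans h hab)
  have hmeasy : Measurable (fun y : ℝ => P {ω' | G t ω' ≤ y}) :=
    Monotone.measurable fun a b hab => measure_mono fun ω' h => le_trans h hab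
  set g : ℕ → Ω → ℝ := fun n ω =>
    cdfRV P (G t) (L - ∑ i ∈ Finset.range n, (V i ω).2)
      * Real.exp (-∑ i ∈ Finset.range n, (V i ω).1 * (t - T i ω))
      * ∏ i ∈ Finset.range n, q (T i ω) with hgdef
  have hgm : ∀ n, Measurable (g n) := by
    intro n
    refine Measurable.mul (Measurable.mul ?_ ?_) ?_
    · exact hcdfm.comp ((Finset.measurable_sum _ fun i _ => (hm.V_meas i).snd).const_sub L)
    · exact (Finset.measurable_sum _ fun i _ =>
        ((hm.V_meas i).fst.mul ((hm.poisson.meas i).const_sub t))).neg.exp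
    · exact Finset.measurable_prod _ fun i _ => hm.q_meas.comp (hm.poisson.meas i)
  set f' : Ω → ℝ := fun ω => g (M ω) ω with hf'def
  have hf'm : Measurable f' := by
    intro A hA
    have hpre : f' ⁻¹' A = ⋃ n, ({ω | M ω = n} ∩ g n ⁻¹' A) := by
      ext ω
      simp only [Set.mem_preimage, Set.mem_iUnion, Set.mem_inter_iff, Set.mem_setOf_eq]
      constructor
      · intro h
        exact ⟨M ω, rfl, h⟩
      · rintro ⟨n, hn, h⟩
        show g (M ω) ω ∈ A
        rw [hn]
        exact h
    rw [hpre]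
    exact MeasurableSet.iUnion fun n => (hMm (measurableSet_singleton n)).inter (hgm n hA)
  have hphi : phi P T V q G t L = ∫ ω, f' ω ∂P := by
    apply integral_congr_ae
    filter_upwards [hm.poisson.strictMono, hm.poisson.tendsto_atTop] with ω h1 h2
    have hc : countPts T t ω = M ω := ncard_eq_mT h1 h2
    simp only [hc, hf'def, hgdef]
  have hnn : 0 ≤ᵐ[P] f' := by
    filter_upwards with ω
    refine mul_nonneg (mul_nonneg ENNReal.toReal_nonneg (Real.exp_pos _).le) ?_
    exact Finset.prod_nonneg fun i _ => (hm.q_mem _).1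
  have hint : ∫ ω, f' ω ∂P = (∫⁻ ω, ENNReal.ofReal (f' ω) ∂P).toReal :=
    integral_eq_lintegral_of_nonneg_ae hnn hf'm.aestronglyMeasurable
  have hdecomp : ∫⁻ ω, ENNReal.ofReal (f' ω) ∂P
      = ∑' n, ∫⁻ ω, (if M ω = n then ENNReal.ofReal (g n ω) else 0) ∂P := by
    have hmt : ∀ n, AEMeasurable (fun ω => if M ω = n then ENNReal.ofReal (g n ω) else 0) P := by
      intro n
      apply Measurable.aemeasurable
      exact Measurable.ite (hMm (measurableSet_singleton n)) ((hgm n).ennreal_ofReal)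
        measurable_const
    rw [← lintegral_tsum hmt]
    apply lintegral_congr
    intro ω
    symm
    rw [tsum_eq_single (M ω) (fun b hb => if_neg fun h => hb h.symm), if_pos rfl]
  have hterm : ∀ n, ∫⁻ ω, (if M ω = n then ENNReal.ofReal (g n ω) else 0) ∂P
      = TermF P (G t) q t L μ (Measure.map Tseq P) n := by
    intro n
    set Xn : Ω → (Fin n → ℝ × ℝ) := fun ω i => V i.val ω with hXndef
    have hXnm : Measurable Xn := measurable_pi_lambda _ fun i => hm.V_meas i.val
    set Fn : (Fin n → ℝ × ℝ) × (ℕ → ℝ) → ℝ≥0∞ := fun z =>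
      if mT t z.2 = n then
        ENNReal.ofReal (∏ i : Fin n, q (z.2 i.val)) *
          ((P {ω' | G t ω' ≤ L - ∑ i, (z.1 i).2})
            * ∏ i, ENNReal.ofReal (Real.exp (-((t - z.2 i.val) * (z.1 i).1))))
      else 0 with hFndef
    have hinnerm : ∀ τ : ℕ → ℝ, Measurable (fun v : Fin n → ℝ × ℝ =>
        (P {ω' | G t ω' ≤ L - ∑ i, (v i).2})
          * ∏ i, ENNReal.ofReal (Real.exp (-((t - τ i.val) * (v i).1)))) := by
      intro τ
      refine Measurable.mul ?_ ?_
      · exact hmeasy.comp ((Finset.measurable_sum _ fun i _ =>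
          (measurable_pi_apply i).snd).const_sub L)
      · exact Finset.measurable_prod _ fun i _ =>
          (((measurable_pi_apply i).fst.const_mul (t - τ i.val)).neg.exp).ennreal_ofReal
    have hFnm : Measurable Fn := by
      have c1 : MeasurableSet {z : (Fin n → ℝ × ℝ) × (ℕ → ℝ) | mT t z.2 = n} :=
        ((mT_meas t).comp measurable_snd) (measurableSet_singleton n)
      have c2 : Measurable fun z : (Fin n → ℝ × ℝ) × (ℕ → ℝ) =>
          ENNReal.ofReal (∏ i : Fin n, q (z.2 i.val)) :=
        (Finset.measurable_prod _ fun i _ =>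
          hm.q_meas.comp ((measurable_pi_apply i.val).comp measurable_snd)).ennreal_ofReal
      have c3 : Measurable fun z : (Fin n → ℝ × ℝ) × (ℕ → ℝ) =>
          P {ω' | G t ω' ≤ L - ∑ i, (z.1 i).2} :=
        hmeasy.comp ((Finset.measurable_sum _ fun i _ =>
          ((measurable_pi_apply i).comp measurable_fst).snd).const_sub L)
      have c4 : Measurable fun z : (Fin n → ℝ × ℝ) × (ℕ → ℝ) =>
          ∏ i, ENNReal.ofReal (Real.exp (-((t - z.2 i.val) * (z.1 i).1))) := by
        refine Finset.measurable_prod _ fun i _ => Measurable.ennreal_ofReal ?_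
        refine Measurable.exp (Measurable.neg (Measurable.mul ?_ ?_))
        · exact (show Measurable fun z : (Fin n → ℝ × ℝ) × (ℕ → ℝ) => z.2 (i:ℕ) from
            (measurable_pi_apply _).comp measurable_snd).const_sub t
        · exact (show Measurable fun z : (Fin n → ℝ × ℝ) × (ℕ → ℝ) => z.1 i from
            (measurable_pi_apply _).comp measurable_fst).fst
      exact Measurable.ite c1 (c2.mul (c3.mul c4)) measurable_const
    have hpt : ∀ ω, (if M ω = n then ENNReal.ofReal (g n ω) else 0) = Fn (Xn ω, Tseq ω) := by
      intro ω
      rw [hFndef]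
      simp only
      by_cases h : M ω = n
      · rw [if_pos h, if_pos h]
        rw [hgdef]
        simp only
        have hA : ENNReal.ofReal (cdfRV P (G t) (L - ∑ i ∈ Finset.range n, (V i ω).2))
            = P {ω' | G t ω' ≤ L - ∑ i : Fin n, (Xn ω i).2} := by
          rw [cdfRV, ENNReal.ofReal_toReal (measure_ne_top _ _)]
          congr 1
          rw [Fin.sum_univ_eq_sum_range (fun i => (V i ω).2) n]
        have hB : ENNReal.ofReal (Real.exp (-∑ i ∈ Finset.range n, (V i ω).1 * (t - T i ω)))
            = ∏ i : Fin n, ENNReal.ofReal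
                (Real.exp (-((t - Tseq ω i.val) * (Xn ω i).1))) := by
          rw [← Finset.sum_neg_distrib, Real.exp_sum,
            ENNReal.ofReal_prod_of_nonneg (fun i _ => (Real.exp_pos _).le),
            ← Fin.prod_univ_eq_prod_range
              (fun i => ENNReal.ofReal (Real.exp (-((V i ω).1 * (t - T i ω))))) n]
          apply Finset.prod_congr rfl
          intro i _
          rw [mul_comm]
        have hC : (0:ℝ) ≤ ∏ i ∈ Finset.range n, q (T i ω) :=
          Finset.prod_nonneg fun i _ => (hm.q_mem _).1
        have hAB : (0:ℝ) ≤ cdfRV P (G t) (L - ∑ i ∈ Finset.range n, (V i ω).2)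
            * Real.exp (-∑ i ∈ Finset.range n, (V i ω).1 * (t - T i ω)) :=
          mul_nonneg ENNReal.toReal_nonneg (Real.exp_pos _).le
        have hAnn : (0:ℝ) ≤ cdfRV P (G t) (L - ∑ i ∈ Finset.range n, (V i ω).2) :=
          ENNReal.toReal_nonneg
        rw [ENNReal.ofReal_mul hAB, ENNReal.ofReal_mul hAnn, hA, hB]
        rw [show ENNReal.ofReal (∏ i ∈ Finset.range n, q (T i ω))
            = ENNReal.ofReal (∏ i : Fin n, q (Tseq ω i.val)) by
          rw [Fin.prod_univ_eq_prod_range (fun i => q (T i ω)) n]]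
        ring
      · rw [if_neg h, if_neg h]
    have hpair : Measurable fun ω => (Xn ω, Tseq ω) := hXnm.prodMk hTm
    have hIndep : IndepFun Xn Tseq P := by
      have hrestr : Measurable fun (f : ℕ → ℝ × ℝ) (i : Fin n) => f i.val :=
        measurable_pi_lambda _ fun i => measurable_pi_apply i.val
      exact hm.V_T_indep.comp hrestr measurable_id
    have hmap : Measure.map (fun ω => (Xn ω, Tseq ω)) P
        = (Measure.map Xn P).prod (Measure.map Tseq P) :=
      (indepFun_iff_map_prod_eq_prod_map_map hXnm.aemeasurable hTm.aemeasurable).mp hIndep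
    have hXnlaw : Measure.map Xn P = Measure.pi fun _ : Fin n => μ :=
      map_tuple_pi P V hm.V_meas hm.V_iIndep μ hm.V_law n
    calc ∫⁻ ω, (if M ω = n then ENNReal.ofReal (g n ω) else 0) ∂P
        = ∫⁻ ω, Fn (Xn ω, Tseq ω) ∂P := lintegral_congr hpt
      _ = ∫⁻ z, Fn z ∂(Measure.map (fun ω => (Xn ω, Tseq ω)) P) :=
          (lintegral_map hFnm hpair).symm
      _ = ∫⁻ z, Fn z ∂((Measure.pi fun _ : Fin n => μ).prod (Measure.map Tseq P)) := by
          rw [hmap, hXnlaw]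
      _ = ∫⁻ τ, ∫⁻ v, Fn (v, τ) ∂(Measure.pi fun _ : Fin n => μ) ∂(Measure.map Tseq P) :=
          lintegral_prod_symm Fn hFnm.aemeasurable
      _ = TermF P (G t) q t L μ (Measure.map Tseq P) n := by
          refine lintegral_congr fun τ => ?_
          by_cases h : mT t τ = n
          · rw [if_pos h]
            have hv : ∀ v : Fin n → ℝ × ℝ, Fn (v, τ)
                = ENNReal.ofReal (∏ i : Fin n, q (τ i.val)) *
                  ((P {ω' | G t ω' ≤ L - ∑ i, (v i).2})
                    * ∏ i, ENNReal.ofReal (Real.exp (-((t - τ i.val) * (v i).1)))) := by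
              intro v
              rw [hFndef]
              simp only
              rw [if_pos h]
            rw [lintegral_congr hv, lintegral_const_mul _ (hinnerm τ)]
          · rw [if_neg h]
            have hv : ∀ v : Fin n → ℝ × ℝ, Fn (v, τ) = 0 := by
              intro v
              rw [hFndef]
              simp only
              rw [if_neg h]
            rw [lintegral_congr hv, lintegral_zero]
  have hbound : ∫⁻ ω, ENNReal.ofReal (f' ω) ∂P ≤ 1 := by
    have hVnn : ∀ᵐ ω ∂P, ∀ i, 0 ≤ (V i ω).1 :=
      (ae_all_iff).mpr fun i => (hm.V_nonneg i).mono fun ω h => h.1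
    have h1 : ∀ᵐ ω ∂P, ENNReal.ofReal (f' ω) ≤ 1 := by
      filter_upwards [hVnn] with ω hω
      rw [← ENNReal.ofReal_one]
      apply ENNReal.ofReal_le_ofReal
      have hA : cdfRV P (G t) (L - ∑ i ∈ Finset.range (M ω), (V i ω).2) ≤ 1 := by
        rw [cdfRV]
        calc (P {ω' | G t ω' ≤ L - ∑ i ∈ Finset.range (M ω), (V i ω).2}).toReal
            ≤ (1:ℝ≥0∞).toReal := ENNReal.toReal_mono ENNReal.one_ne_top prob_le_one
          _ = 1 := ENNReal.toReal_one
      have hB : Real.exp (-∑ i ∈ Finset.range (M ω), (V i ω).1 * (t - T i ω)) ≤ 1 := by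
        rw [Real.exp_le_one_iff, neg_nonpos]
        refine Finset.sum_nonneg fun i hi => mul_nonneg (hω i) (sub_nonneg.mpr ?_)
        exact le_of_lt_mT (Finset.mem_range.mp hi)
      have hC : ∏ i ∈ Finset.range (M ω), q (T i ω) ≤ 1 :=
        Finset.prod_le_one (fun i _ => (hm.q_mem _).1) (fun i _ => (hm.q_mem _).2)
      have hCnn : (0:ℝ) ≤ ∏ i ∈ Finset.range (M ω), q (T i ω) :=
        Finset.prod_nonneg fun i _ => (hm.q_mem _).1
      exact mul_le_one₀ (mul_le_one₀ hA (Real.exp_pos _).le hB) hCnn hC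
    calc ∫⁻ ω, ENNReal.ofReal (f' ω) ∂P ≤ ∫⁻ _, 1 ∂P := lintegral_mono_ae h1
      _ = 1 := by rw [lintegral_one, measure_univ]
  constructor
  · rw [hphi, hint, hdecomp]
    congr 1
    exact tsum_congr hterm
  · rw [← tsum_congr hterm, ← hdecomp]
    exact hbound



end Aux

/-- influence of the dependence between `V⁽¹⁾` and `V⁽²⁾`:
if the generic shock increment `(V⁽¹⁾, V⁽²⁾)` is smaller than `(Ṽ⁽¹⁾, Ṽ⁽²⁾)` in the
lower orthant order (equivalently, in the upper orthant survival form), then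
`φ_t(L) ≤ φ̃_t(L)` for all `t ≥ 0` and `L ≥ 0`; consequently the corresponding
lifetimes satisfy `τ ≤_st τ̃`, i.e. `e^{−H(t)} φ_t(L) ≤ e^{−H(t)} φ̃_t(L)` for all `t`. -/
theorem phi_mono_in_lower_orthant {Ω : Type*} [MeasurableSpace Ω] (P : Measure Ω)
    (lam Λ : ℝ → ℝ) (T : ℕ → Ω → ℝ) (V W : ℕ → Ω → ℝ × ℝ)
    (μ ν : Measure (ℝ × ℝ)) (q : ℝ → ℝ) (G : ℝ → Ω → ℝ)
    (hmodel : ShockModel P lam Λ T V μ q G)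
    (hmodelt : ShockModel P lam Λ T W ν q G)
    (h_lo : ∀ x₁ x₂ : ℝ,
      P {ω | (V 0 ω).1 ≤ x₁ ∧ (V 0 ω).2 ≤ x₂} ≤ P {ω | (W 0 ω).1 ≤ x₁ ∧ (W 0 ω).2 ≤ x₂})
    (h_uo : ∀ x₁ x₂ : ℝ,
      P {ω | x₁ < (V 0 ω).1 ∧ x₂ < (V 0 ω).2} ≤ P {ω | x₁ < (W 0 ω).1 ∧ x₂ < (W 0 ω).2})
    (h H : ℝ → ℝ) (h_meas : Measurable h) (h_nonneg : ∀ x, 0 ≤ h x)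
    (h_locInt : ∀ t : ℝ, 0 ≤ t → IntervalIntegrable h volume 0 t)
    (H_def : ∀ t : ℝ, H t = ∫ x in (0:ℝ)..t, h x) :
    ∀ t L : ℝ, 0 ≤ t → 0 ≤ L →
      phi P T V q G t L ≤ phi P T W q G t L
      ∧ Real.exp (-(H t)) * phi P T V q G t L
          ≤ Real.exp (-(H t)) * phi P T W q G t L := by
  intro t L ht hL
  haveI := hmodel.prob
  haveI hμp : IsProbabilityMeasure μ := by
    rw [← hmodel.V_law 0]; exact Measure.isProbabilityMeasure_map (hmodel.V_meas 0).aemeasurable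
  haveI hνp : IsProbabilityMeasure ν := by
    rw [← hmodelt.V_law 0]; exact Measure.isProbabilityMeasure_map (hmodelt.V_meas 0).aemeasurable
  have hμae : ∀ᵐ p ∂μ, 0 ≤ p.1 := by
    rw [← hmodel.V_law 0]
    rw [ae_map_iff (hmodel.V_meas 0).aemeasurable
      (measurableSet_le measurable_const measurable_fst)]
    exact (hmodel.V_nonneg 0).mono fun ω h => h.1
  have hνae : ∀ᵐ p ∂ν, 0 ≤ p.1 := by
    rw [← hmodelt.V_law 0]
    rw [ae_map_iff (hmodelt.V_meas 0).aemeasurable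
      (measurableSet_le measurable_const measurable_fst)]
    exact (hmodelt.V_nonneg 0).mono fun ω h => h.1
  have hlo' : ∀ x₁ x₂ : ℝ, μ {p | p.1 ≤ x₁ ∧ p.2 ≤ x₂} ≤ ν {p | p.1 ≤ x₁ ∧ p.2 ≤ x₂} := by
    intro x₁ x₂
    have hms : MeasurableSet {p : ℝ × ℝ | p.1 ≤ x₁ ∧ p.2 ≤ x₂} :=
      (measurableSet_le measurable_fst measurable_const).inter
        (measurableSet_le measurable_snd measurable_const)
    rw [← hmodel.V_law 0, ← hmodelt.V_law 0, Measure.map_apply (hmodel.V_meas 0) hms,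
      Measure.map_apply (hmodelt.V_meas 0) hms]
    exact h_lo x₁ x₂
  obtain ⟨hrep1, hb1⟩ := phi_repr hmodel t L
  obtain ⟨hrep2, hb2⟩ := phi_repr hmodelt t L
  have hmono : (∑' n, TermF P (G t) q t L μ (Measure.map (fun ω i => T i ω) P) n)
      ≤ ∑' n, TermF P (G t) q t L ν (Measure.map (fun ω i => T i ω) P) n :=
    ENNReal.tsum_le_tsum fun n =>
      TermF_mono P (hmodel.G_meas t) q t L hμae hνae hlo' _ n
  have hphile : phi P T V q G t L ≤ phi P T W q G t L := by
    rw [hrep1, hrep2]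
    exact ENNReal.toReal_mono (lt_of_le_of_lt hb2 ENNReal.one_lt_top).ne hmono
  exact ⟨hphile, mul_le_mul_of_nonneg_left hphile (Real.exp_pos _).le⟩
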